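/- arXiv:1910.12377 — 2 statements merged into one kernel-verified Lean document; each statement's English description precedes it below -/
import Mathlib

section
/- Let S be a numerical semigroup whose left elements have greatest common divisor 1. Then T = ⟨L(S)⟩ is a numerical semigroup and T is a descendant of S (or equal to S). -/
/-- A numerical semigroup: a cofinite additive submonoid of ℕ containing 0. -/
def IsNumericalSemigroup (S : Set ℕ) : Prop :=
  0 ∈ S ∧ (∀ a ∈ S, ∀ b ∈ S, a + b ∈ S) ∧ Sᶜ.Finite

/-- The nsConductor: least `c` such that every `n ≥ c` belongs to `S`. -/
noncomputable def nsConductor (S : Set ℕ) : ℕ :=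
  sInf {c : ℕ | ∀ n : ℕ, c ≤ n → n ∈ S}

/-- The genus: number of gaps. -/
noncomputable def genus (S : Set ℕ) : ℕ := Sᶜ.ncard

/-- The Frobenius number: largest integer not in `S` (for `S ≠ ℕ`). -/
noncomputable def nsFrobenius (S : Set ℕ) : ℕ := sSup Sᶜ

/-- The multiplicity: least positive element of `S`. -/
noncomputable def mult (S : Set ℕ) : ℕ := sInf {n : ℕ | n ∈ S ∧ n ≠ 0}

/-- `p` is a minimal generator (primitive) of `S`: nonzero element of `S` that is
not a sum of two nonzero elements of `S`. -/
def IsPrimitive (S : Set ℕ) (p : ℕ) : Prop :=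
  p ∈ S ∧ p ≠ 0 ∧ ∀ a ∈ S, ∀ b ∈ S, a ≠ 0 → b ≠ 0 → a + b ≠ p

/-- The set of minimal generators of `S`. -/
def primitives (S : Set ℕ) : Set ℕ := {p | IsPrimitive S p}

/-- The embedding dimension: number of minimal generators. -/
noncomputable def edim (S : Set ℕ) : ℕ := (primitives S).ncard

/-- The left elements: elements of `S` strictly below the nsConductor. -/
def lefts (S : Set ℕ) : Set ℕ := {s ∈ S | s < nsConductor S}

/-- The additive submonoid of ℕ generated by a set, viewed as a set. -/
def genBy (X : Set ℕ) : Set ℕ := (AddSubmonoid.closure X : Set ℕ)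

/-- `T` is a child of `S`: obtained by removing one big primitive. -/
def ChildOf (S T : Set ℕ) : Prop :=
  ∃ p : ℕ, IsPrimitive S p ∧ nsConductor S ≤ p ∧ T = S \ {p}

/-- `T` is a descendant of `S` (possibly `T = S`): obtained by finitely many
removals of big primitives. -/
def DescendantOf (S T : Set ℕ) : Prop :=
  Relation.ReflTransGen (fun A B => ChildOf A B) S T

/-- The gcd of the set `X` equals `1`: the only common divisor of all elements is `1`. -/
def SetGcdOne (X : Set ℕ) : Prop :=
  ∀ d : ℕ, (∀ x ∈ X, d ∣ x) → d = 1

-- existence of consecutive elements in closure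
lemma exists_consec (X : Set ℕ) (h : SetGcdOne X) :
    ∃ b : ℕ, b ∈ AddSubmonoid.closure X ∧ b + 1 ∈ AddSubmonoid.closure X := by
  set P := AddSubmonoid.closure X with hP
  let D : AddSubgroup ℤ :=
  { carrier := {z | ∃ a ∈ P, ∃ b ∈ P, (a : ℤ) - b = z}
    zero_mem' := ⟨0, P.zero_mem, 0, P.zero_mem, by ring⟩
    add_mem' := by
      rintro x y ⟨a, ha, b, hb, rfl⟩ ⟨c, hc, d, hd, rfl⟩
      exact ⟨a + c, P.add_mem ha hc, b + d, P.add_mem hb hd, by push_cast; ring⟩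
    neg_mem' := by
      rintro x ⟨a, ha, b, hb, rfl⟩
      exact ⟨b, hb, a, ha, by ring⟩ }
  obtain ⟨g, hg⟩ := Int.subgroup_cyclic D
  have hgD : g ∈ D := by rw [hg]; exact AddSubgroup.subset_closure rfl
  have hdvd : ∀ x ∈ X, g.natAbs ∣ x := by
    intro x hx
    have hxD : (x : ℤ) ∈ D := ⟨x, AddSubmonoid.subset_closure hx, 0, P.zero_mem, by ring⟩
    rw [hg, AddSubgroup.mem_closure_singleton] at hxD
    obtain ⟨n, hn⟩ := hxD
    have : g ∣ (x : ℤ) := ⟨n, by rw [← hn, smul_eq_mul, mul_comm]⟩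
    exact Int.natAbs_dvd_natAbs.mpr this
  have hg1 : g.natAbs = 1 := h _ hdvd
  have h1D : (1 : ℤ) ∈ D := by
    rw [hg, AddSubgroup.mem_closure_singleton]
    refine ⟨g, ?_⟩
    rw [smul_eq_mul, ← Int.natAbs_mul_self, hg1]
    norm_num
  obtain ⟨a, ha, b, hb, hab⟩ := h1D
  have : a = b + 1 := by
    have : (a : ℤ) = (b : ℤ) + 1 := by linarith
    exact_mod_cast this
  exact ⟨b, hb, this ▸ ha⟩

lemma cof_of_gcd (X : Set ℕ) (h : SetGcdOne X) :
    ((AddSubmonoid.closure X : Set ℕ))ᶜ.Finite := by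
  obtain ⟨b, hb, hb1⟩ := exists_consec X h
  set P := AddSubmonoid.closure X with hP
  by_cases hb0 : b = 0
  · subst hb0
    have : ∀ n : ℕ, n ∈ P := by
      intro n
      have := AddSubmonoid.nsmul_mem P hb1 n
      simpa using this
    have : ((P : Set ℕ))ᶜ = ∅ := by
      ext n; simp [this n]
    rw [this]; exact Set.finite_empty
  · apply Set.Finite.subset (Set.finite_Iio (b * b))
    intro n hn
    simp only [Set.mem_compl_iff, Set.mem_Iio] at hn ⊢
    by_contra hge
    push_neg at hge
    apply hn
    set q := n / b
    set r := n % b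
    have hr : r < b := Nat.mod_lt _ (Nat.pos_of_ne_zero hb0)
    have hq : b ≤ q := (Nat.le_div_iff_mul_le (Nat.pos_of_ne_zero hb0)).mpr (by nlinarith)
    have hn' : n = b * q + r := (Nat.div_add_mod n b).symm ▸ by omega
    have key : n = (q - r) • b + r • (b + 1) := by
      simp only [smul_eq_mul]
      have : q - r + r = q := by omega
      nlinarith [Nat.sub_add_cancel (le_trans hr.le hq)]
    rw [key]
    exact P.add_mem (AddSubmonoid.nsmul_mem P hb _) (AddSubmonoid.nsmul_mem P hb1 _)

lemma conductor_spec (S : Set ℕ) (hfin : Sᶜ.Finite) :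
    ∀ n : ℕ, nsConductor S ≤ n → n ∈ S := by
  have hne : {c : ℕ | ∀ n : ℕ, c ≤ n → n ∈ S}.Nonempty := by
    rcases Set.eq_empty_or_nonempty Sᶜ with h | h
    · exact ⟨0, fun n _ => by
        have : n ∉ Sᶜ := h ▸ Set.notMem_empty n
        simpa using this⟩
    · refine ⟨sSup Sᶜ + 1, fun n hn => ?_⟩
      by_contra hns
      have : n ≤ sSup Sᶜ := le_csSup hfin.bddAbove hns
      omega
  exact Nat.sInf_mem hne

lemma desc_aux (n : ℕ) : ∀ S T : Set ℕ, IsNumericalSemigroup S → IsNumericalSemigroup T →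
    T ⊆ S → (∀ s ∈ S, s ∉ T → nsConductor S ≤ s) → (S \ T).ncard = n →
    Relation.ReflTransGen (fun A B => ChildOf A B) S T := by
  induction n with
  | zero =>
    intro S T hS hT hsub hcond hcard
    have hfin : (S \ T).Finite := hT.2.2.subset (fun x hx => hx.2)
    have hempty : S \ T = ∅ := (Set.ncard_eq_zero hfin).mp hcard
    have : S = T := by
      apply Set.Subset.antisymm _ hsub
      intro x hx
      by_contra hxT
      exact (Set.eq_empty_iff_forall_notMem.mp hempty x) ⟨hx, hxT⟩
    rw [this]
  | succ n ih =>
    intro S T hS hT hsub hcond hcard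
    have hfin : (S \ T).Finite := hT.2.2.subset (fun x hx => hx.2)
    have hne : (S \ T).Nonempty := by
      rw [Set.nonempty_iff_ne_empty]
      intro h
      rw [h, Set.ncard_empty] at hcard
      omega
    set p := sInf (S \ T) with hp
    have hpmem : p ∈ S \ T := Nat.sInf_mem hne
    have hp0 : p ≠ 0 := by
      intro h
      exact hpmem.2 (h ▸ hT.1)
    have hprim : IsPrimitive S p := by
      refine ⟨hpmem.1, hp0, fun a ha b hb ha0 hb0 hab => ?_⟩
      have haT : a ∈ T := by
        by_contra h
        have : p ≤ a := Nat.sInf_le ⟨ha, h⟩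
        omega
      have hbT : b ∈ T := by
        by_contra h
        have : p ≤ b := Nat.sInf_le ⟨hb, h⟩
        omega
      exact hpmem.2 (hab ▸ hT.2.1 a haT b hbT)
    have hcp : nsConductor S ≤ p := hcond p hpmem.1 hpmem.2
    set S' := S \ {p} with hS'
    have hS'ns : IsNumericalSemigroup S' := by
      refine ⟨⟨hS.1, by simpa using hp0.symm⟩, ?_, ?_⟩
      · rintro a ⟨ha, hap⟩ b ⟨hb, hbp⟩
        refine ⟨hS.2.1 a ha b hb, ?_⟩
        simp only [Set.mem_singleton_iff] at hap hbp ⊢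
        rcases Nat.eq_zero_or_pos a with h0 | h0
        · subst h0; simpa using hbp
        rcases Nat.eq_zero_or_pos b with h0' | h0'
        · subst h0'; simpa using hap
        exact hprim.2.2 a ha b hb (by omega) (by omega)
      · have : S'ᶜ = Sᶜ ∪ {p} := by
          ext x
          simp [hS', Set.mem_diff]
          tauto
        rw [this]
        exact hS.2.2.union (Set.finite_singleton p)
    have hTS' : T ⊆ S' := fun x hx => ⟨hsub hx, by
      simp only [Set.mem_singleton_iff]
      intro h
      exact hpmem.2 (h ▸ hx)⟩
    have hcS' : nsConductor S' ≤ p + 1 := by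
      apply Nat.sInf_le
      intro m hm
      refine ⟨conductor_spec S hS.2.2 m (by omega), ?_⟩
      simp only [Set.mem_singleton_iff]
      omega
    have hcond' : ∀ s ∈ S', s ∉ T → nsConductor S' ≤ s := by
      rintro s ⟨hsS, hsp⟩ hsT
      simp only [Set.mem_singleton_iff] at hsp
      have : p ≤ s := Nat.sInf_le ⟨hsS, hsT⟩
      omega
    have hcard' : (S' \ T).ncard = n := by
      have heq : S' \ T = (S \ T) \ {p} := by
        ext x
        simp [hS', Set.mem_diff]
        tauto
      rw [heq, Set.ncard_diff_singleton_of_mem hpmem, hcard]; omega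
    exact Relation.ReflTransGen.head ⟨p, hprim, hcp, rfl⟩
      (ih S' T hS'ns hT hTS' hcond' hcard')


theorem stmt10 (S : Set ℕ) (hS : IsNumericalSemigroup S) (hgcd : SetGcdOne (lefts S)) :
    IsNumericalSemigroup (genBy (lefts S)) ∧ DescendantOf S (genBy (lefts S)) := by
  set X := lefts S with hX
  have hT : IsNumericalSemigroup (genBy X) :=
    ⟨AddSubmonoid.zero_mem _, fun a ha b hb => AddSubmonoid.add_mem _ ha hb, cof_of_gcd X hgcd⟩
  have hsub : genBy X ⊆ S := by
    intro x hx
    have hle : AddSubmonoid.closure X ≤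
        ⟨⟨S, fun {a b} ha hb => hS.2.1 a ha b hb⟩, hS.1⟩ :=
      AddSubmonoid.closure_le.mpr (fun y hy => hy.1)
    exact hle hx
  have hcond : ∀ s ∈ S, s ∉ genBy X → nsConductor S ≤ s := by
    intro s hs hsT
    by_contra h
    push_neg at h
    exact hsT (AddSubmonoid.subset_closure ⟨hs, h⟩)
  exact ⟨hT, desc_aux _ S _ hS hT hsub hcond rfl⟩
end

section
/- Let g be a positive integer and S a numerical semigroup, and let T = ⟨L(S)⟩. Then every descendant S' of S (including S itself) has genus g(S') ≤ g if and only if T is a numerical semigroup (i.e., gcd(L(S)) = 1) and g(T) ≤ g. -/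
-- conductor set nonempty
lemma cset_nonempty {S : Set ℕ} (h : Sᶜ.Finite) :
    {c : ℕ | ∀ n : ℕ, c ≤ n → n ∈ S}.Nonempty := by
  obtain ⟨B, hB⟩ := h.bddAbove
  refine ⟨B + 1, fun n hn => ?_⟩
  by_contra hn'
  exact absurd (hB hn') (by omega)

lemma nsConductor_spec {S : Set ℕ} (h : Sᶜ.Finite) :
    ∀ n : ℕ, nsConductor S ≤ n → n ∈ S :=
  Nat.sInf_mem (cset_nonempty h)

lemma nsConductor_mono {S M : Set ℕ} (h : Mᶜ.Finite) (hsub : M ⊆ S) :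
    nsConductor S ≤ nsConductor M :=
  Nat.sInf_le (fun n hn => hsub (nsConductor_spec h n hn))

/-- Child facts. -/
lemma child_facts {S S' : Set ℕ} (hS : IsNumericalSemigroup S) (h : ChildOf S S') :
    IsNumericalSemigroup S' ∧ S' ⊆ S ∧ nsConductor S ≤ nsConductor S' := by
  obtain ⟨p, ⟨hpS, hp0, hprim⟩, hpc, rfl⟩ := h
  obtain ⟨h0, hadd, hfin⟩ := hS
  have hsub : S \ {p} ⊆ S := Set.diff_subset
  have hns : IsNumericalSemigroup (S \ {p}) := by
    refine ⟨⟨h0, by simpa using hp0.symm⟩, ?_, ?_⟩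
    · rintro a ⟨haS, hap⟩ b ⟨hbS, hbp⟩
      refine ⟨hadd a haS b hbS, ?_⟩
      simp only [Set.mem_singleton_iff] at *
      intro habp
      rcases Nat.eq_zero_or_pos a with ha0 | ha0
      · exact hbp (by omega)
      rcases Nat.eq_zero_or_pos b with hb0 | hb0
      · exact hap (by omega)
      exact hprim a haS b hbS (by omega) (by omega) habp
    · have : (S \ {p})ᶜ = Sᶜ ∪ {p} := by
        ext x; simp [Set.mem_diff, not_and_or, or_comm]; tauto
      rw [this]; exact hfin.union (Set.finite_singleton p)
  exact ⟨hns, hsub, nsConductor_mono hns.2.2 hsub⟩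

/-- Descendant facts. -/
lemma descendant_facts {S S' : Set ℕ} (hS : IsNumericalSemigroup S)
    (h : DescendantOf S S') :
    IsNumericalSemigroup S' ∧ S' ⊆ S ∧ nsConductor S ≤ nsConductor S' := by
  induction h with
  | refl => exact ⟨hS, le_refl _, le_refl _⟩
  | tail _hd hchild ih =>
    obtain ⟨hM, hMS, hcM⟩ := ih
    obtain ⟨hns, hsub, hc⟩ := child_facts hM hchild
    exact ⟨hns, hsub.trans hMS, hcM.trans hc⟩

lemma lefts_subset_descendant {S S' : Set ℕ} (hS : IsNumericalSemigroup S)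
    (h : DescendantOf S S') : lefts S ⊆ S' := by
  induction h with
  | refl => exact fun x hx => hx.1
  | tail hd hchild ih =>
    obtain ⟨hM, _, hcM⟩ := descendant_facts hS hd
    obtain ⟨p, hp, hpc, rfl⟩ := hchild
    intro x hx
    refine ⟨ih hx, ?_⟩
    have : x < nsConductor S := hx.2
    simp only [Set.mem_singleton_iff]
    omega

/-- every t in genBy X divisible by common divisor -/
lemma genBy_dvd {X : Set ℕ} {d : ℕ} (hd : ∀ x ∈ X, d ∣ x) :
    ∀ t ∈ genBy X, d ∣ t := by
  intro t ht
  have ht2 : t ∈ AddSubmonoid.closure X := ht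
  clear ht
  induction ht2 using AddSubmonoid.closure_induction with
  | mem x hx => exact hd x hx
  | zero => exact dvd_zero d
  | add a b _ _ ha hb => exact dvd_add ha hb

lemma genBy_subset {X A : Set ℕ} (h0 : 0 ∈ A)
    (hadd : ∀ a ∈ A, ∀ b ∈ A, a + b ∈ A) (hXA : X ⊆ A) : genBy X ⊆ A := by
  intro t ht
  have ht2 : t ∈ AddSubmonoid.closure X := ht
  clear ht
  induction ht2 using AddSubmonoid.closure_induction with
  | mem x hx => exact hXA hx
  | zero => exact h0
  | add a b _ _ ha hb => exact hadd a ha b hb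

lemma genBy_cofinite {X : Set ℕ} (h : SetGcdOne X) : (genBy X)ᶜ.Finite := by
  set H := AddSubgroup.closure ((Nat.cast : ℕ → ℤ) '' X) with hH
  obtain ⟨a, ha⟩ := Int.subgroup_cyclic H
  have hdvd : ∀ x ∈ X, a.natAbs ∣ x := by
    intro x hx
    have hxH : (x : ℤ) ∈ H := AddSubgroup.subset_closure ⟨x, hx, rfl⟩
    rw [ha, AddSubgroup.mem_closure_singleton] at hxH
    obtain ⟨n, hn⟩ := hxH
    have : a ∣ (x : ℤ) := Dvd.intro_left n (by simpa [zsmul_eq_mul] using hn)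
    have := Int.natAbs_dvd_natAbs.mpr this
    simpa using this
  have ha1 : a.natAbs = 1 := h _ hdvd
  have h1H : (1 : ℤ) ∈ H := by
    rw [ha, AddSubgroup.mem_closure_singleton]
    rcases Int.natAbs_eq_iff.mp ha1 with h' | h'
    · exact ⟨1, by simp [h']⟩
    · exact ⟨-1, by simp [h']⟩
  have key : ∀ z ∈ H, ∃ u v : ℕ, u ∈ genBy X ∧ v ∈ genBy X ∧ z = (u : ℤ) - v := by
    intro z hz
    induction hz using AddSubgroup.closure_induction with
    | mem x hx =>
      obtain ⟨n, hn, rfl⟩ := hx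
      exact ⟨n, 0, AddSubmonoid.subset_closure hn, (AddSubmonoid.closure X).zero_mem, by simp⟩
    | zero => exact ⟨0, 0, (AddSubmonoid.closure X).zero_mem, (AddSubmonoid.closure X).zero_mem, by simp⟩
    | add z w _ _ hz hw =>
      obtain ⟨u1, v1, hu1, hv1, rfl⟩ := hz
      obtain ⟨u2, v2, hu2, hv2, rfl⟩ := hw
      exact ⟨u1 + u2, v1 + v2, (AddSubmonoid.closure X).add_mem hu1 hu2,
        (AddSubmonoid.closure X).add_mem hv1 hv2, by push_cast; ring⟩
    | neg z _ hz =>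
      obtain ⟨u, v, hu, hv, rfl⟩ := hz
      exact ⟨v, u, hv, hu, by ring⟩
  obtain ⟨u, v, hu, hv, huv⟩ := key 1 h1H
  have huv' : u = v + 1 := by omega
  have hbig : ∀ n : ℕ, v * v ≤ n → n ∈ genBy X := by
    intro n hn
    rcases Nat.eq_zero_or_pos v with hv0 | hv0
    · subst hv0
      have : n • u ∈ AddSubmonoid.closure X := AddSubmonoid.nsmul_mem _ hu n
      have hnu : n • u = n := by simp [huv', smul_eq_mul]
      rw [hnu] at this
      exact this
    · set q := n / v with hq
      set r := n % v with hr
      have hrv : r < v := Nat.mod_lt _ hv0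
      have hqv : v ≤ q := Nat.le_div_iff_mul_le hv0 |>.mpr (by nlinarith)
      have hrq : r ≤ q := by omega
      have hmem : r • u + (q - r) • v ∈ AddSubmonoid.closure X :=
        (AddSubmonoid.closure X).add_mem (AddSubmonoid.nsmul_mem _ hu r)
          (AddSubmonoid.nsmul_mem _ hv (q - r))
      have heq : r • u + (q - r) • v = n := by
        simp only [smul_eq_mul]
        have h1 : r * u + (q - r) * v = (r + (q - r)) * v + r := by rw [huv']; ring
        rw [h1, Nat.add_sub_cancel' hrq]
        rw [hq, hr]
        exact Nat.div_add_mod' n v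
      rw [heq] at hmem
      exact hmem
  have : (genBy X)ᶜ ⊆ Set.Iio (v * v) := by
    intro n hn
    by_contra hn'
    exact hn (hbig n (by simpa [Set.mem_Iio] using hn'))
  exact (Set.finite_Iio _).subset this

lemma descendantOf_of_between :
    ∀ n : ℕ, ∀ S S' : Set ℕ, IsNumericalSemigroup S → IsNumericalSemigroup S' →
      lefts S ⊆ S' → S' ⊆ S → (S \ S').ncard = n → DescendantOf S S' := by
  intro n
  induction n using Nat.strong_induction_on with
  | _ n ih =>
    intro S S' hS hS' hlef hsub hcard
    have hfinD : (S \ S').Finite := hS'.2.2.subset (fun x hx => hx.2)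
    rcases Set.eq_empty_or_nonempty (S \ S') with hemp | hne
    · have heq : S = S' := Set.Subset.antisymm (fun x hx => by
        by_contra hx'
        exact Set.notMem_empty x (hemp ▸ (⟨hx, hx'⟩ : x ∈ S \ S'))) hsub
      rw [heq]
      exact Relation.ReflTransGen.refl
    · set p := sInf (S \ S') with hp
      have hpmem : p ∈ S \ S' := Nat.sInf_mem hne
      have hpmin : ∀ x, x < p → x ∉ S \ S' := fun x hx => Nat.notMem_of_lt_sInf hx
      have hp0 : p ≠ 0 := by
        intro h0
        exact hpmem.2 (h0 ▸ hS'.1)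
      have hprim : IsPrimitive S p := by
        refine ⟨hpmem.1, hp0, ?_⟩
        intro a haS b hbS ha0 hb0 hab
        have haS' : a ∈ S' := by
          by_contra h''
          exact hpmin a (by omega) ⟨haS, h''⟩
        have hbS' : b ∈ S' := by
          by_contra h''
          exact hpmin b (by omega) ⟨hbS, h''⟩
        exact hpmem.2 (hab ▸ hS'.2.1 a haS' b hbS')
      have hpc : nsConductor S ≤ p := by
        by_contra h''
        exact hpmem.2 (hlef ⟨hpmem.1, by omega⟩)
      have hchild : ChildOf S (S \ {p}) := ⟨p, hprim, hpc, rfl⟩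
      obtain ⟨hS1, hsub1, _⟩ := child_facts hS hchild
      have hc1 : nsConductor (S \ {p}) ≤ p + 1 := by
        apply Nat.sInf_le
        intro m hm
        exact ⟨nsConductor_spec hS.2.2 m (by omega), by simp; omega⟩
      have hlef1 : lefts (S \ {p}) ⊆ S' := by
        rintro x ⟨⟨hxS, hxp⟩, hxc⟩
        simp only [Set.mem_singleton_iff] at hxp
        have hxlt : x < p := by omega
        by_contra h''
        exact hpmin x hxlt ⟨hxS, h''⟩
      have hsub1' : S' ⊆ S \ {p} := fun x hx =>
        ⟨hsub hx, by simp; intro h''; exact hpmem.2 (h'' ▸ hx)⟩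
      have hcard1 : ((S \ {p}) \ S').ncard < n := by
        have heq : (S \ {p}) \ S' = (S \ S') \ {p} := by
          ext x; simp [Set.mem_diff]; tauto
        rw [heq, ← hcard]
        exact Set.ncard_diff_singleton_lt_of_mem hpmem hfinD
      exact Relation.ReflTransGen.head hchild
        (ih _ hcard1 (S \ {p}) S' hS1 hS' hlef1 hsub1' rfl)

theorem stmt16 (g : ℕ) (hg : 0 < g) (S : Set ℕ) (hS : IsNumericalSemigroup S) :
    (∀ S' : Set ℕ, DescendantOf S S' → genus S' ≤ g) ↔
      SetGcdOne (lefts S) ∧ genus (genBy (lefts S)) ≤ g := by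
  have hTS : genBy (lefts S) ⊆ S := genBy_subset hS.1 hS.2.1 (fun x hx => hx.1)
  constructor
  · intro h
    have hgcd : SetGcdOne (lefts S) := by
      by_contra hgcd
      rw [SetGcdOne] at hgcd
      push_neg at hgcd
      obtain ⟨d, hd, hd1⟩ := hgcd
      -- replace d by e ≥ 2
      set e := if d = 0 then 2 else d with he
      have he2 : 2 ≤ e := by
        rcases Nat.eq_zero_or_pos d with h0 | h0
        · simp [he, h0]
        · simp only [he, if_neg (by omega : d ≠ 0)]
          omega
      have hedvd : ∀ x ∈ lefts S, e ∣ x := by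
        intro x hx
        rcases Nat.eq_zero_or_pos d with h0 | h0
        · have := hd x hx
          rw [h0] at this
          simp only [he, if_pos h0]
          omega
        · simpa [he, if_neg (by omega : d ≠ 0)] using hd x hx
      set N := nsConductor S + (g + 1) * e + 2 with hN
      set S' := genBy (lefts S) ∪ {n : ℕ | N ≤ n} with hS'def
      have hS'ns : IsNumericalSemigroup S' := by
        refine ⟨Or.inl ((AddSubmonoid.closure (lefts S)).zero_mem), ?_, ?_⟩
        · rintro a (ha | ha) b (hb | hb)
          · exact Or.inl ((AddSubmonoid.closure (lefts S)).add_mem ha hb)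
          · exact Or.inr (by simp only [Set.mem_setOf_eq] at *; omega)
          · exact Or.inr (by simp only [Set.mem_setOf_eq] at *; omega)
          · exact Or.inr (by simp only [Set.mem_setOf_eq] at *; omega)
        · refine (Set.finite_Iio N).subset ?_
          intro x hx
          simp only [Set.mem_compl_iff, hS'def, Set.mem_union, Set.mem_setOf_eq, not_or] at hx
          simp only [Set.mem_Iio]
          omega
      have hlefS' : lefts S ⊆ S' := fun x hx => Or.inl (AddSubmonoid.subset_closure hx)
      have hS'S : S' ⊆ S := by
        rintro x (hx | hx)
        · exact hTS hx
        · exact nsConductor_spec hS.2.2 x (by simp only [Set.mem_setOf_eq] at hx; omega)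
      have hdesc : DescendantOf S S' :=
        descendantOf_of_between _ S S' hS hS'ns hlefS' hS'S rfl
      have hgen : g + 1 ≤ genus S' := by
        set F : Finset ℕ := (Finset.range (g + 1)).image (fun k => k * e + 1) with hF
        have hFsub : (↑F : Set ℕ) ⊆ S'ᶜ := by
          intro x hx
          simp only [hF, Finset.coe_image, Finset.coe_range, Set.mem_image, Set.mem_Iio] at hx
          obtain ⟨k, hk, rfl⟩ := hx
          simp only [Set.mem_compl_iff, hS'def, Set.mem_union, Set.mem_setOf_eq, not_or]
          constructor
          · intro hmem
            have := genBy_dvd hedvd _ hmem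
            have h1 : e ∣ 1 := (Nat.dvd_add_right (Dvd.intro_left k rfl)).mp this
            have := Nat.le_of_dvd one_pos h1
            omega
          · have h2 : k * e ≤ g * e := Nat.mul_le_mul_right e (by omega)
            have h3 : (g + 1) * e = g * e + e := by ring
            omega
        have hcardF : F.card = g + 1 := by
          rw [hF, Finset.card_image_of_injective _ (fun a b hab => by
            have : a * e = b * e := by omega
            exact Nat.eq_of_mul_eq_mul_right (by omega) this), Finset.card_range]
        calc g + 1 = F.card := hcardF.symm
          _ = (↑F : Set ℕ).ncard := (Set.ncard_coe_finset F).symm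
          _ ≤ S'ᶜ.ncard := Set.ncard_le_ncard hFsub hS'ns.2.2
          _ = genus S' := rfl
      have := h S' hdesc
      omega
    refine ⟨hgcd, ?_⟩
    have hTfin := genBy_cofinite hgcd
    have hTns : IsNumericalSemigroup (genBy (lefts S)) :=
      ⟨(AddSubmonoid.closure (lefts S)).zero_mem,
       fun a ha b hb => (AddSubmonoid.closure (lefts S)).add_mem ha hb, hTfin⟩
    exact h _ (descendantOf_of_between _ S _ hS hTns
      (fun x hx => AddSubmonoid.subset_closure hx) hTS rfl)
  · rintro ⟨hgcd, hgT⟩ S' hdesc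
    obtain ⟨hS'ns, hS'S, _⟩ := descendant_facts hS hdesc
    have hlef := lefts_subset_descendant hS hdesc
    have hT : genBy (lefts S) ⊆ S' := genBy_subset hS'ns.1 hS'ns.2.1 hlef
    have hcompl : S'ᶜ ⊆ (genBy (lefts S))ᶜ := Set.compl_subset_compl.mpr hT
    calc genus S' ≤ genus (genBy (lefts S)) :=
          Set.ncard_le_ncard hcompl (genBy_cofinite hgcd)
      _ ≤ g := hgT
end
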